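/- Let m ≥ 3 be an integer and let Z be the center of the dihedral Artin group G(m). If m is even, then G(m)/Z is isomorphic to the free product (ℤ/(m/2)ℤ) ∗ ℤ; if m is odd, then G(m)/Z is isomorphic to the free product (ℤ/2ℤ) ∗ (ℤ/mℤ). -/

import Mathlib

/-- The alternating product `xyxy⋯` with `m` factors, starting with `x`. -/
def altProd {G : Type*} [Monoid G] : ℕ → G → G → G
  | 0, _, _ => 1
  | m + 1, x, y => x * altProd m y x

/-- The Artin relators associated to a Coxeter matrix `M` (with entries in `ℕ∞`):
for each pair `i ≠ j` with `M i j = m` finite, the relator `ₘ(xᵢ,xⱼ) ₘ(xⱼ,xᵢ)⁻¹`. -/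
def artinRels {n : ℕ} (M : Fin n → Fin n → ℕ∞) : Set (FreeGroup (Fin n)) :=
  { r | ∃ (i j : Fin n) (m : ℕ), i ≠ j ∧ M i j = (m : ℕ∞) ∧
        r = altProd m (FreeGroup.of i) (FreeGroup.of j) *
            (altProd m (FreeGroup.of j) (FreeGroup.of i))⁻¹ }

/-- The Artin group defined by the Coxeter matrix `M`. -/
abbrev ArtinGroup {n : ℕ} (M : Fin n → Fin n → ℕ∞) : Type := PresentedGroup (artinRels M)

/-- The standard generators of the Artin group. -/
def agen {n : ℕ} (M : Fin n → Fin n → ℕ∞) (i : Fin n) : ArtinGroup M :=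
  PresentedGroup.of i

/-- `M` is a Coxeter matrix of extra-large type: symmetric, `1` on the diagonal,
and all off-diagonal entries at least `4` (possibly `∞`). -/
structure IsXLMatrix {n : ℕ} (M : Fin n → Fin n → ℕ∞) : Prop where
  symm : ∀ i j, M i j = M j i
  diag : ∀ i, M i i = 1
  large : ∀ i j, i ≠ j → 4 ≤ M i j

/-- `M` is a Coxeter matrix of large type: symmetric, `1` on the diagonal,
and all off-diagonal entries at least `3` (possibly `∞`). -/
structure IsLargeMatrix {n : ℕ} (M : Fin n → Fin n → ℕ∞) : Prop where
  symm : ∀ i j, M i j = M j i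
  diag : ∀ i, M i i = 1
  large : ∀ i j, i ≠ j → 3 ≤ M i j

/-- The element of a group represented by a word over `X ∪ X⁻¹`, where a word is a list
of pairs `(i, ε)` with `ε = true` for the generator `x i` and `ε = false` for its inverse. -/
def wordProd {G : Type*} [Group G] {α : Type*} (x : α → G) (w : List (α × Bool)) : G :=
  (w.map fun p => if p.2 then x p.1 else (x p.1)⁻¹).prod

/-- The length `|g|` of `g`: the minimal length of a word over `X ∪ X⁻¹` representing `g`. -/
noncomputable def wlen {G : Type*} [Group G] {α : Type*} (x : α → G) (g : G) : ℕ :=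
  sInf { k | ∃ w : List (α × Bool), w.length = k ∧ wordProd x w = g }

/-- A word is geodesic if its length equals the length of the element it represents. -/
def IsGeodesicWord {G : Type*} [Group G] {α : Type*} (x : α → G) (w : List (α × Bool)) :
    Prop :=
  w.length = wlen x (wordProd x w)

/-- An element `g` is cyclically reduced if `|a g a⁻¹| ≥ |g|` for every letter
`a ∈ X ∪ X⁻¹`. -/
def CyclicallyReduced {G : Type*} [Group G] {α : Type*} (x : α → G) (g : G) : Prop :=
  ∀ p : α × Bool, wlen x g ≤ wlen x (wordProd x [p] * g * (wordProd x [p])⁻¹)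

/-- `d` is a left divisor of `g`: `|d| + |d⁻¹g| = |g|`. -/
def IsLeftDivisor {G : Type*} [Group G] {α : Type*} (x : α → G) (d g : G) : Prop :=
  wlen x d + wlen x (d⁻¹ * g) = wlen x g

/-- `d` is a right divisor of `g`: `|gd⁻¹| + |d| = |g|`. -/
def IsRightDivisor {G : Type*} [Group G] {α : Type*} (x : α → G) (d g : G) : Prop :=
  wlen x (g * d⁻¹) + wlen x d = wlen x g

/-- The Coxeter matrix of the dihedral Artin group `G(m)`. -/
def Mdih (m : ℕ) : Fin 2 → Fin 2 → ℕ∞ := fun i j => if i = j then 1 else (m : ℕ∞)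

/-- The dihedral Artin group `G(m) = ⟨x₁,x₂ ∣ ₘ(x₁,x₂) = ₘ(x₂,x₁)⟩`. -/
abbrev DihedralArtinGroup (m : ℕ) : Type := ArtinGroup (Mdih m)

section AuxDihedral
open Monoid CoprodI
open scoped Monoid.Coprod

namespace Scratch
variable {ι : Type*} [DecidableEq ι] {M : ι → Type*} [∀ i, Group (M i)]

lemma prod_injective [∀ i, DecidableEq (M i)] :
    Function.Injective (CoprodI.Word.prod : CoprodI.Word M → CoprodI M) := by
  have : (CoprodI.Word.prod : CoprodI.Word M → CoprodI M) = CoprodI.Word.equiv.symm := rfl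
  rw [this]
  exact CoprodI.Word.equiv.symm.injective

lemma prod_equiv [∀ i, DecidableEq (M i)] (g : CoprodI M) :
    (CoprodI.Word.equiv g).prod = g :=
  CoprodI.Word.equiv.symm_apply_apply g

def invRevList (L : List (Σ i, M i)) : List (Σ i, M i) :=
  (L.map fun x => ⟨x.1, x.2⁻¹⟩).reverse

@[simp] lemma invRevList_length (L : List (Σ i, M i)) :
    (invRevList L).length = L.length := by simp [invRevList]

lemma invRevList_cons (x : (Σ i, M i)) (L : List (Σ i, M i)) :
    invRevList (x :: L) = invRevList L ++ [⟨x.1, x.2⁻¹⟩] := by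
  simp [invRevList]

@[simp] lemma invRevList_invRevList (L : List (Σ i, M i)) :
    invRevList (invRevList L) = L := by
  simp only [invRevList, List.map_reverse, List.reverse_reverse, List.map_map]
  rw [show ((fun x => (⟨x.1, x.2⁻¹⟩ : Σ i, M i)) ∘ fun x : Σ i, M i => (⟨x.1, x.2⁻¹⟩ : Σ i, M i))
      = id from funext fun x => by simp]
  simp

def Word.invRev (w : CoprodI.Word M) : CoprodI.Word M where
  toList := invRevList w.toList
  ne_one := by
    intro l hl
    simp only [invRevList, List.mem_reverse, List.mem_map] at hl
    obtain ⟨x, hx, rfl⟩ := hl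
    simpa using w.ne_one x hx
  chain_ne := by
    rw [invRevList, List.isChain_reverse]
    refine (List.isChain_map _).2 ?_
    refine w.chain_ne.imp ?_
    intro a b h
    exact fun h' => h h'.symm

@[simp] lemma Word.invRev_toList (w : CoprodI.Word M) :
    (Word.invRev w).toList = invRevList w.toList := rfl

@[simp] lemma Word.prod_invRev (w : CoprodI.Word M) :
    (Word.invRev w).prod = w.prod⁻¹ := by
  rw [CoprodI.Word.prod, CoprodI.Word.prod, List.prod_inv_reverse]
  simp only [Word.invRev, invRevList, List.map_reverse, List.map_map]
  rw [show ((fun l : Σ i, M i => (of l.snd : CoprodI M)) ∘ fun x : Σ i, M i => (⟨x.1, x.2⁻¹⟩ : Σ i, M i))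
      = ((fun x => x⁻¹) ∘ fun l : Σ i, M i => (of l.snd : CoprodI M)) from funext fun x => by simp]

lemma eq_one_of_commute_all [∀ i, DecidableEq (M i)]
    (hnt : ∀ i : ι, ∃ j : ι, j ≠ i ∧ ∃ h : M j, h ≠ 1)
    (g : CoprodI M) (hg : ∀ x : CoprodI M, Commute x g) : g = 1 := by
  by_contra hg1
  set w : CoprodI.Word M := CoprodI.Word.equiv g with hwdef
  have hw : w.prod = g := prod_equiv g
  have hwne : w.toList ≠ [] := by
    intro h
    apply hg1
    rw [← hw, CoprodI.Word.prod, h]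
    simp
  obtain ⟨x, L, hxL⟩ : ∃ x L, w.toList = x :: L := by
    cases h : w.toList with
    | nil => exact absurd h hwne
    | cons a l => exact ⟨a, l, rfl⟩
  obtain ⟨j, hji, h, hh1⟩ := hnt x.1
  have hfst : w.fstIdx ≠ some j := by
    simp only [CoprodI.Word.fstIdx, hxL, List.head?_cons, Option.map_some]
    intro hcon
    exact hji (Option.some_injective _ hcon).symm
  set w₁ : CoprodI.Word M := CoprodI.Word.cons h w hfst hh1 with hw₁def
  have hw₁ : w₁.prod = of h * g := by
    rw [hw₁def, CoprodI.Word.prod_cons, hw]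
  have hw₁list : w₁.toList = ⟨j, h⟩ :: w.toList := rfl
  set v : CoprodI.Word M := Word.invRev w with hvdef
  have hv : v.prod = g⁻¹ := by rw [hvdef, Word.prod_invRev, hw]
  by_cases hc : v.fstIdx ≠ some j
  · -- append at the end
    set w₂ : CoprodI.Word M := Word.invRev (CoprodI.Word.cons h⁻¹ v hc (inv_ne_one.2 hh1))
      with hw₂def
    have hw₂ : w₂.prod = of h * g := by
      rw [hw₂def, Word.prod_invRev, CoprodI.Word.prod_cons, hv, mul_inv_rev, inv_inv, map_inv,
        inv_inv]
      exact ((hg (of h)).eq).symm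
    have heq : w₁ = w₂ := prod_injective (by rw [hw₁, hw₂])
    have h2 : w₂.toList = w.toList ++ [⟨j, h⟩] := by
      rw [hw₂def, Word.invRev_toList,
        show (CoprodI.Word.cons h⁻¹ v hc (inv_ne_one.2 hh1)).toList
          = (⟨j, h⁻¹⟩ : Σ i, M i) :: v.toList from rfl,
        invRevList_cons, hvdef, Word.invRev_toList, invRevList_invRevList]
      simp
    have hlists : (⟨j, h⟩ : Σ i, M i) :: w.toList = w.toList ++ [⟨j, h⟩] := by
      rw [← hw₁list, ← h2, heq]
    have hhead := congrArg List.head? hlists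
    rw [hxL] at hhead
    simp only [List.head?_cons, List.cons_append, List.head?_append] at hhead
    have : (⟨j, h⟩ : Σ i, M i) = x := by
      simpa using hhead
    exact hji (congrArg Sigma.fst this)
  · push_neg at hc
    have hvne : v.toList ≠ [] := by
      intro hnil
      apply hwne
      have := congrArg List.length hnil
      simp only [hvdef, Word.invRev_toList, invRevList_length, List.length_nil] at this
      exact List.length_eq_zero_iff.1 this
    obtain ⟨y, R, hyR⟩ : ∃ y R, v.toList = y :: R := by
      cases hh : v.toList with
      | nil => exact absurd hh hvne
      | cons a l => exact ⟨a, l, rfl⟩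
    have hyj : y.1 = j := by
      have : v.fstIdx = some y.1 := by simp [CoprodI.Word.fstIdx, hyR]
      rw [hc] at this
      exact (Option.some_injective _ this).symm
    obtain ⟨j', b⟩ := y
    dsimp at hyj
    subst hyj
    set rest : CoprodI.Word M := ⟨R, fun l hl => v.ne_one l (hyR ▸ List.mem_cons_of_mem _ hl),
      by have hch := v.chain_ne; rw [hyR] at hch; exact hch.tail⟩ with hrestdef
    have hvprod : v.prod = of b * rest.prod := by
      rw [CoprodI.Word.prod, hyR]
      simp [CoprodI.Word.prod, hrestdef]
    have hrfst : rest.fstIdx ≠ some j' := by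
      have hch := v.chain_ne
      rw [hyR, List.isChain_cons] at hch
      intro hcon
      obtain ⟨z, hz⟩ : ∃ z, R.head? = some z := by
        cases hR : R with
        | nil =>
          rw [hrestdef] at hcon; simp [CoprodI.Word.fstIdx, hR] at hcon
        | cons a l => exact ⟨a, by simp [hR]⟩
      have hne := hch.1 z hz
      have hz1 : z.1 = j' := by
        simp only [CoprodI.Word.fstIdx, hrestdef] at hcon
        rw [hz] at hcon
        simpa using hcon
      exact hne hz1.symm
    have helem : of h⁻¹ * g⁻¹ = of (h⁻¹ * b) * rest.prod := by
      rw [← hv, hvprod, map_mul, mul_assoc]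
    have helem2 : (Word.invRev w₁).prod = of h⁻¹ * g⁻¹ := by
      rw [Word.prod_invRev, hw₁, mul_inv_rev, map_inv]
      exact (((hg ((of h)⁻¹)).inv_right).eq).symm
    have hlen1 : (Word.invRev w₁).toList.length = w.toList.length + 1 := by
      rw [Word.invRev_toList, invRevList_length, hw₁list]
      simp
    have hRlen : R.length + 1 = w.toList.length := by
      have : v.toList.length = w.toList.length := by
        rw [hvdef, Word.invRev_toList, invRevList_length]
      rw [← this, hyR]
      simp
    by_cases hb : h⁻¹ * b = 1
    · have hpr : (Word.invRev w₁).prod = rest.prod := by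
        rw [helem2, helem, hb]
        simp
      have heq := prod_injective hpr
      have hlen := congrArg (fun u => u.toList.length) heq
      simp only [hlen1, hrestdef] at hlen
      omega
    · set w₂ : CoprodI.Word M := CoprodI.Word.cons (h⁻¹ * b) rest hrfst hb with hw₂def
      have hpr : (Word.invRev w₁).prod = w₂.prod := by
        rw [helem2, helem, hw₂def, CoprodI.Word.prod_cons]
      have heq := prod_injective hpr
      have hlen := congrArg (fun u => u.toList.length) heq
      simp only [hlen1, hw₂def, CoprodI.Word.cons, hrestdef, List.length_cons] at hlen
      omega

end Scratch


namespace Scratch2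

universe u
variable (A B : Type u) [Group A] [Group B]

/-- The two factors as a Bool-indexed family. -/
abbrev Fac : Bool → Type u := fun b => cond b A B

instance : ∀ b, Group (Fac A B b) := fun b => by cases b <;> (dsimp [Fac]; infer_instance)

def toI : A ∗ B →* CoprodI (Fac A B) :=
  Coprod.lift (CoprodI.of : Fac A B true →* _) (CoprodI.of : Fac A B false →* _)

def ofI : CoprodI (Fac A B) →* A ∗ B :=
  CoprodI.lift fun b => (match b with
    | true => Coprod.inl
    | false => Coprod.inr)

lemma ofI_comp_toI : (ofI A B).comp (toI A B) = MonoidHom.id _ := by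
  apply Coprod.hom_ext <;> ext x
  · show ofI A B (toI A B (Coprod.inl x)) = Coprod.inl x
    rw [toI, Coprod.lift_apply_inl, ofI]
    exact CoprodI.lift_of (M := Fac A B) _ (i := true) x
  · show ofI A B (toI A B (Coprod.inr x)) = Coprod.inr x
    rw [toI, Coprod.lift_apply_inr, ofI]
    exact CoprodI.lift_of (M := Fac A B) _ (i := false) x

lemma toI_comp_ofI : (toI A B).comp (ofI A B) = MonoidHom.id _ := by
  apply CoprodI.ext_hom
  intro i
  cases i <;> ext x
  · show toI A B (ofI A B (CoprodI.of x)) = CoprodI.of x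
    rw [ofI, CoprodI.lift_of (M := Fac A B) _ (i := false) x]
    exact Coprod.lift_apply_inr _ _ x
  · show toI A B (ofI A B (CoprodI.of x)) = CoprodI.of x
    rw [ofI, CoprodI.lift_of (M := Fac A B) _ (i := true) x]
    exact Coprod.lift_apply_inl _ _ x

lemma coprod_eq_one_of_commute_all (a0 : A) (ha0 : a0 ≠ 1) (b0 : B) (hb0 : b0 ≠ 1)
    (g : A ∗ B) (hg : ∀ x : A ∗ B, Commute x g) : g = 1 := by
  classical
  have hsurj : Function.Surjective (toI A B) := by
    intro y
    exact ⟨ofI A B y, by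
      have := congrArg (fun f => (f : _ →* _) y) (toI_comp_ofI A B)
      simpa using this⟩
  have h1 : toI A B g = 1 := by
    apply Scratch.eq_one_of_commute_all (M := Fac A B)
    · intro i
      cases i
      · exact ⟨true, by simp, a0, ha0⟩
      · exact ⟨false, by simp, b0, hb0⟩
    · intro x
      obtain ⟨y, rfl⟩ := hsurj x
      exact ((hg y).map (toI A B))
  have := congrArg (fun f => (f : _ →* _) g) (ofI_comp_toI A B)
  simp only [MonoidHom.comp_apply, MonoidHom.id_apply] at this
  rw [← this, h1, map_one]

end Scratch2

namespace DihedralAux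

/-! ### `altProd` basics -/

lemma altProd_succ {G : Type*} [Monoid G] (n : ℕ) (x y : G) :
    altProd (n + 1) x y = x * altProd n y x := rfl

lemma altProd_two_mul {G : Type*} [Monoid G] (k : ℕ) (x y : G) :
    altProd (2 * k) x y = (x * y) ^ k := by
  induction k with
  | zero => simp [altProd]
  | succ k ih =>
    have h2 : 2 * (k + 1) = (2 * k) + 1 + 1 := by ring
    rw [h2, altProd_succ, altProd_succ, ih, pow_succ']
    rw [mul_assoc]

lemma semiconj_alt {G : Type*} [Monoid G] (x y : G) : SemiconjBy x (y * x) (x * y) := by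
  show x * (y * x) = (x * y) * x
  rw [mul_assoc]

lemma mul_pow_swap {G : Type*} [Monoid G] (x y : G) (k : ℕ) :
    x * (y * x) ^ k = (x * y) ^ k * x :=
  ((semiconj_alt x y).pow_right k).eq

lemma altProd_odd {G : Type*} [Monoid G] (k : ℕ) (x y : G) :
    altProd (2 * k + 1) x y = (x * y) ^ k * x := by
  rw [altProd_succ, altProd_two_mul, mul_pow_swap]

lemma map_altProd {G H : Type*} [Monoid G] [Monoid H] (f : G →* H) (n : ℕ) (x y : G) :
    f (altProd n x y) = altProd n (f x) (f y) := by
  induction n generalizing x y with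
  | zero => simp [altProd]
  | succ n ih => rw [altProd_succ, altProd_succ, map_mul, ih]

/-! ### The dihedral Artin group -/

variable (m : ℕ)

def X : DihedralArtinGroup m := PresentedGroup.of 0
def Y : DihedralArtinGroup m := PresentedGroup.of 1

lemma Mdih_ne {i j : Fin 2} (hij : i ≠ j) : Mdih m i j = (m : ℕ∞) := by
  simp [Mdih, hij]

lemma rels_cond {T : Type*} [Group T] (f : Fin 2 → T)
    (hrel : altProd m (f 0) (f 1) = altProd m (f 1) (f 0)) :
    ∀ r ∈ artinRels (Mdih m), FreeGroup.lift f r = 1 := by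
  rintro r ⟨i, j, m', hij, hM, rfl⟩
  have hm' : m' = m := by
    rw [Mdih_ne m hij] at hM
    have := hM.symm
    exact_mod_cast this
  subst hm'
  have hsymm : altProd m' (f i) (f j) = altProd m' (f j) (f i) := by
    fin_cases i <;> fin_cases j <;> first | (exact absurd rfl hij) | exact hrel | exact hrel.symm
  rw [map_mul, map_inv, map_altProd, map_altProd, FreeGroup.lift_apply_of, FreeGroup.lift_apply_of,
    hsymm, mul_inv_cancel]

/-- The homomorphism out of the dihedral Artin group determined by images of the generators
satisfying the relation. -/
def dihHom {T : Type*} [Group T] (f : Fin 2 → T)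
    (hrel : altProd m (f 0) (f 1) = altProd m (f 1) (f 0)) :
    DihedralArtinGroup m →* T :=
  PresentedGroup.toGroup (rels_cond m f hrel)

@[simp] lemma dihHom_of {T : Type*} [Group T] (f : Fin 2 → T)
    (hrel : altProd m (f 0) (f 1) = altProd m (f 1) (f 0)) (i : Fin 2) :
    dihHom m f hrel (PresentedGroup.of i) = f i :=
  PresentedGroup.toGroup.of _

/-- The defining relation holds in the dihedral Artin group. -/
lemma dih_rel : altProd m (X m) (Y m) = altProd m (Y m) (X m) := by
  have hmem : (altProd m (FreeGroup.of 0) (FreeGroup.of 1) *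
      (altProd m (FreeGroup.of 1) (FreeGroup.of 0))⁻¹ : FreeGroup (Fin 2)) ∈
      artinRels (Mdih m) :=
    ⟨0, 1, m, by decide, by simp [Mdih], rfl⟩
  have h1 : PresentedGroup.mk (artinRels (Mdih m))
      (altProd m (FreeGroup.of 0) (FreeGroup.of 1) *
        (altProd m (FreeGroup.of 1) (FreeGroup.of 0))⁻¹) = 1 :=
    (QuotientGroup.eq_one_iff _).2 (Subgroup.subset_normalClosure hmem)
  rw [map_mul, map_inv, map_altProd, map_altProd, mul_inv_eq_one] at h1
  exact h1

lemma mem_center_of_commute_gens {α : Type*} {rels : Set (FreeGroup α)}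
    (c : PresentedGroup rels) (h : ∀ i : α, Commute (PresentedGroup.of i) c) :
    c ∈ Subgroup.center (PresentedGroup rels) := by
  rw [Subgroup.mem_center_iff]
  intro g
  have hg : g ∈ Subgroup.centralizer {c} := by
    refine PresentedGroup.generated_by rels (Subgroup.centralizer {c}) ?_ g
    intro j
    rw [Subgroup.mem_centralizer_iff]
    rintro h' rfl
    exact (h j).eq.symm
  rw [Subgroup.mem_centralizer_iff] at hg
  exact (hg c rfl).symm

/-! ### Generic construction of the quotient isomorphism -/

lemma build_iso {T : Type*} [Group T] (f : Fin 2 → T)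
    (hrel : altProd m (f 0) (f 1) = altProd m (f 1) (f 0))
    (hsurj : Function.Surjective (dihHom m f hrel))
    (hT : ∀ u : T, (∀ x : T, Commute x u) → u = 1)
    (ψ : T →* DihedralArtinGroup m ⧸ Subgroup.center (DihedralArtinGroup m))
    (hψφ : ∀ g : DihedralArtinGroup m,
      ψ (dihHom m f hrel g) = QuotientGroup.mk g) :
    Nonempty ((DihedralArtinGroup m ⧸ Subgroup.center (DihedralArtinGroup m)) ≃* T) := by
  set φ := dihHom m f hrel with hφ
  have hker : ∀ g ∈ Subgroup.center (DihedralArtinGroup m), φ g = 1 := by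
    intro g hg
    apply hT
    intro x
    obtain ⟨y, rfl⟩ := hsurj x
    have hcy : Commute y g := Subgroup.mem_center_iff.1 hg y
    exact hcy.map φ
  let φbar := QuotientGroup.lift _ φ hker
  have hφbar_mk : ∀ g : DihedralArtinGroup m, φbar (QuotientGroup.mk g) = φ g :=
    fun g => rfl
  have hsurj' : Function.Surjective φbar := by
    intro x
    obtain ⟨g, rfl⟩ := hsurj x
    exact ⟨QuotientGroup.mk g, hφbar_mk g⟩
  have hinj : Function.Injective φbar := by
    intro q1 q2 h12
    induction q1 using QuotientGroup.induction_on with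
    | H g1 =>
    induction q2 using QuotientGroup.induction_on with
    | H g2 =>
    rw [hφbar_mk, hφbar_mk] at h12
    have := congrArg ψ h12
    rw [hψφ, hψφ] at this
    exact this
  exact ⟨MulEquiv.ofBijective φbar ⟨hinj, hsurj'⟩⟩

/-! ### Homomorphisms from `Multiplicative (ZMod n)` -/

def zmodGenHom {Q : Type*} [Group Q] (n : ℕ) (q : Q) (hq : q ^ (n : ℕ) = 1) :
    Multiplicative (ZMod n) →* Q :=
  AddMonoidHom.toMultiplicativeLeft
    (ZMod.lift n ⟨(zmultiplesHom (Additive Q)) (Additive.ofMul q), by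
      show ((n : ℤ) • Additive.ofMul q) = 0
      rw [← ofMul_zpow]
      simp [hq]⟩)

lemma zmodGenHom_intCast {Q : Type*} [Group Q] (n : ℕ) (q : Q) (hq : q ^ (n : ℕ) = 1)
    (z : ℤ) :
    zmodGenHom n q hq (Multiplicative.ofAdd ((z : ZMod n))) = q ^ z := by
  unfold zmodGenHom
  simp only [AddMonoidHom.coe_toMultiplicativeLeft, Function.comp_apply, toAdd_ofAdd,
    ZMod.lift_coe]
  show Additive.toMul ((z : ℤ) • Additive.ofMul q) = q ^ z
  rw [← ofMul_zpow]
  rfl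

lemma zmodGenHom_one {Q : Type*} [Group Q] (n : ℕ) (q : Q) (hq : q ^ (n : ℕ) = 1) :
    zmodGenHom n q hq (Multiplicative.ofAdd (1 : ZMod n)) = q := by
  have := zmodGenHom_intCast n q hq 1
  simpa using this

lemma zmod_eq_gen_pow (n : ℕ) [NeZero n] (x : Multiplicative (ZMod n)) :
    x = (Multiplicative.ofAdd (1 : ZMod n)) ^ (Multiplicative.toAdd x).val := by
  rw [← ofAdd_nsmul]
  rw [nsmul_eq_mul, mul_one, ZMod.natCast_val, ZMod.cast_id]
  rfl

lemma int_eq_gen_zpow (x : Multiplicative ℤ) :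
    x = (Multiplicative.ofAdd (1 : ℤ)) ^ (Multiplicative.toAdd x) := by
  rw [← ofAdd_zsmul, smul_eq_mul, mul_one]
  rfl

end DihedralAux


namespace DihedralAux
open Monoid
open scoped Monoid.Coprod

/-! ### The even case -/

theorem even_iso (N : ℕ) (hN : 2 ≤ N) :
    Nonempty ((DihedralArtinGroup (2 * N) ⧸ Subgroup.center (DihedralArtinGroup (2 * N))) ≃*
      (Multiplicative (ZMod N) ∗ Multiplicative ℤ)) := by
  haveI : NeZero N := ⟨by omega⟩
  haveI : Fact (1 < N) := ⟨by omega⟩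
  set m := 2 * N with hm
  set T := (Multiplicative (ZMod N) ∗ Multiplicative ℤ) with hT
  set s : T := Coprod.inl (Multiplicative.ofAdd (1 : ZMod N)) with hs
  set t : T := Coprod.inr (Multiplicative.ofAdd (1 : ℤ)) with ht
  have hsN : s ^ N = 1 := by
    rw [hs, ← map_pow, ← ofAdd_nsmul]
    have : N • (1 : ZMod N) = 0 := by
      rw [nsmul_eq_mul, mul_one, ZMod.natCast_self]
    rw [this, ofAdd_zero, map_one]
  set f : Fin 2 → T := ![t, t⁻¹ * s] with hf
  have hf0 : f 0 = t := rfl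
  have hf1 : f 1 = t⁻¹ * s := rfl
  have hprod01 : f 0 * f 1 = s := by rw [hf0, hf1, mul_inv_cancel_left]
  have hprod10 : f 1 * f 0 = t⁻¹ * s * t := by rw [hf0, hf1]
  have hrel : altProd m (f 0) (f 1) = altProd m (f 1) (f 0) := by
    rw [hm, altProd_two_mul, altProd_two_mul, hprod01, hprod10, hsN]
    calc (1 : T) = t⁻¹ * (s ^ N) * t := by rw [hsN, mul_one, inv_mul_cancel]
    _ = (t⁻¹ * s * t⁻¹⁻¹) ^ N := by rw [conj_pow, inv_inv]
    _ = (t⁻¹ * s * t) ^ N := by rw [inv_inv]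
  set φ := dihHom m f hrel with hφ
  -- basic images
  have hφX : φ (X m) = t := dihHom_of m f hrel 0
  have hφY : φ (Y m) = t⁻¹ * s := dihHom_of m f hrel 1
  have hφXY : φ (X m * Y m) = s := by rw [map_mul, hφX, hφY, mul_inv_cancel_left]
  -- the central element
  have hkey : (X m * Y m) ^ N = (Y m * X m) ^ N := by
    have := dih_rel m
    rw [hm, altProd_two_mul, altProd_two_mul] at this
    exact this
  have hcent : (X m * Y m) ^ N ∈ Subgroup.center (DihedralArtinGroup m) := by
    apply mem_center_of_commute_gens
    intro i
    fin_cases i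
    · show Commute (X m) ((X m * Y m) ^ N)
      have h1 : X m * (Y m * X m) ^ N = (X m * Y m) ^ N * X m := mul_pow_swap _ _ N
      show X m * (X m * Y m) ^ N = (X m * Y m) ^ N * X m
      rw [hkey] at h1 ⊢
      exact h1
    · show Commute (Y m) ((X m * Y m) ^ N)
      have h2 : Y m * (X m * Y m) ^ N = (Y m * X m) ^ N * Y m := mul_pow_swap _ _ N
      show Y m * (X m * Y m) ^ N = (X m * Y m) ^ N * Y m
      rw [h2, ← hkey]
  -- surjectivity
  have hsurj : Function.Surjective φ := by
    have hrange : ∀ u : T, u ∈ φ.range := by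
      intro u
      induction u using Coprod.induction_on with
      | inl a =>
        have ha : Coprod.inl a = s ^ (Multiplicative.toAdd a).val := by
          rw [hs, ← map_pow, ← zmod_eq_gen_pow]
        rw [ha, ← hφXY, ← map_pow]
        exact ⟨_, rfl⟩
      | inr a =>
        have ha : Coprod.inr a = t ^ (Multiplicative.toAdd a) := by
          rw [ht, ← map_zpow, ← int_eq_gen_zpow]
        rw [ha, ← hφX, ← map_zpow]
        exact ⟨_, rfl⟩
      | mul x y hx hy => exact mul_mem hx hy
    intro u
    exact hrange u
  -- triviality of the centre of T
  have hT1 : ∀ u : T, (∀ x : T, Commute x u) → u = 1 := by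
    intro u hu
    refine Scratch2.coprod_eq_one_of_commute_all _ _
      (Multiplicative.ofAdd (1 : ZMod N)) ?_ (Multiplicative.ofAdd (1 : ℤ)) ?_ u hu
    · intro hcon
      have : (1 : ZMod N) = 0 := by
        have := congrArg Multiplicative.toAdd hcon
        simpa using this
      exact one_ne_zero this
    · intro hcon
      have : (1 : ℤ) = 0 := by
        have := congrArg Multiplicative.toAdd hcon
        simpa using this
      norm_num at this
  -- the inverse homomorphism
  set Q := DihedralArtinGroup m ⧸ Subgroup.center (DihedralArtinGroup m) with hQ
  have hβN : ((QuotientGroup.mk (X m * Y m) : Q)) ^ N = 1 := by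
    rw [← QuotientGroup.mk_pow]
    exact (QuotientGroup.eq_one_iff _).2 hcent
  set ψ : T →* Q := Coprod.lift (zmodGenHom N _ hβN) (zpowersHom Q (QuotientGroup.mk (X m)))
    with hψ
  have hψs : ψ s = QuotientGroup.mk (X m * Y m) := by
    rw [hs, hψ, Coprod.lift_apply_inl, zmodGenHom_one]
  have hψt : ψ t = QuotientGroup.mk (X m) := by
    rw [ht, hψ, Coprod.lift_apply_inr]
    show (QuotientGroup.mk (X m) : Q) ^ (1 : ℤ) = _
    rw [zpow_one]
  have hψφ : ∀ g : DihedralArtinGroup m, ψ (φ g) = QuotientGroup.mk g := by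
    have hhom : ψ.comp φ = QuotientGroup.mk' (Subgroup.center (DihedralArtinGroup m)) := by
      apply PresentedGroup.ext
      intro i
      fin_cases i
      · show ψ (φ (X m)) = _
        rw [hφX, hψt]
        rfl
      · show ψ (φ (Y m)) = _
        rw [hφY, map_mul, map_inv, hψt, hψs]
        show _ = QuotientGroup.mk (Y m)
        rw [← QuotientGroup.mk_inv, ← QuotientGroup.mk_mul, inv_mul_cancel_left]
    intro g
    exact DFunLike.congr_fun hhom g
  exact build_iso m f hrel hsurj hT1 ψ hψφ

end DihedralAux

namespace DihedralAux
open Monoid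
open scoped Monoid.Coprod

/-! ### The odd case -/

theorem odd_iso (k : ℕ) (hk : 1 ≤ k) :
    Nonempty ((DihedralArtinGroup (2 * k + 1) ⧸
        Subgroup.center (DihedralArtinGroup (2 * k + 1))) ≃*
      (Multiplicative (ZMod 2) ∗ Multiplicative (ZMod (2 * k + 1)))) := by
  haveI : NeZero (2 * k + 1) := ⟨by omega⟩
  haveI : Fact (1 < 2 * k + 1) := ⟨by omega⟩
  haveI : Fact (1 < 2) := ⟨by omega⟩
  set T := (Multiplicative (ZMod 2) ∗ Multiplicative (ZMod (2 * k + 1))) with hT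
  set s : T := Coprod.inl (Multiplicative.ofAdd (1 : ZMod 2)) with hs
  set t : T := Coprod.inr (Multiplicative.ofAdd (1 : ZMod (2 * k + 1))) with ht
  have hs2 : s ^ 2 = 1 := by
    rw [hs, ← map_pow, ← ofAdd_nsmul]
    have h2 : 2 • (1 : ZMod 2) = 0 := by
      rw [nsmul_eq_mul, mul_one]
      exact_mod_cast ZMod.natCast_self 2
    rw [h2, ofAdd_zero, map_one]
  have hss : s⁻¹ = s := by
    rw [pow_two] at hs2
    exact inv_eq_of_mul_eq_one_right hs2
  have htm : t ^ (2 * k + 1) = 1 := by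
    rw [ht, ← map_pow, ← ofAdd_nsmul]
    have h2 : (2 * k + 1) • (1 : ZMod (2 * k + 1)) = 0 := by
      rw [nsmul_eq_mul, mul_one, ZMod.natCast_self]
    rw [h2, ofAdd_zero, map_one]
  set f : Fin 2 → T := ![(t ^ k)⁻¹ * s, s⁻¹ * t ^ (k + 1)] with hf
  have hf0 : f 0 = (t ^ k)⁻¹ * s := rfl
  have hf1 : f 1 = s⁻¹ * t ^ (k + 1) := rfl
  have hprod01 : f 0 * f 1 = t := by
    rw [hf0, hf1, mul_assoc, mul_inv_cancel_left, pow_succ, inv_mul_cancel_left]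
  have hprod10 : f 1 * f 0 = s⁻¹ * t * s := by
    rw [hf0, hf1]
    rw [pow_succ']; simp only [mul_assoc, mul_inv_cancel_left]
  have hL : altProd (2 * k + 1) (f 0) (f 1) = s := by
    rw [altProd_odd, hprod01, hf0, mul_inv_cancel_left]
  have hconj : (s⁻¹ * t * s) ^ k = s⁻¹ * t ^ k * s := by
    rw [show s⁻¹ * t ^ k * s = s⁻¹ * t ^ k * s⁻¹⁻¹ from by rw [inv_inv], ← conj_pow, inv_inv]
  have hR : altProd (2 * k + 1) (f 1) (f 0) = s⁻¹ := by
    rw [altProd_odd, hprod10, hf1, hconj]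
    calc s⁻¹ * t ^ k * s * (s⁻¹ * t ^ (k + 1)) = s⁻¹ * t ^ (2 * k + 1) := by rw [show t ^ (2 * k + 1) = t ^ k * t ^ (k + 1) by rw [← pow_add]; congr 1; omega]; simp only [mul_assoc]; rw [mul_inv_cancel_left]
    _ = s⁻¹ := by rw [htm, mul_one]
  have hrel : altProd (2 * k + 1) (f 0) (f 1) = altProd (2 * k + 1) (f 1) (f 0) := by
    rw [hL, hR, hss]
  set φ := dihHom (2 * k + 1) f hrel with hφ
  have hφX : φ (X (2 * k + 1)) = (t ^ k)⁻¹ * s := dihHom_of (2 * k + 1) f hrel 0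
  have hφY : φ (Y (2 * k + 1)) = s⁻¹ * t ^ (k + 1) := dihHom_of (2 * k + 1) f hrel 1
  have hφXY : φ (X (2 * k + 1) * Y (2 * k + 1)) = t := by
    rw [map_mul, hφX, hφY, ← hf0, ← hf1, hprod01]
  -- notation
  set G := DihedralArtinGroup (2 * k + 1) with hG
  set x : G := X (2 * k + 1) with hx
  set y : G := Y (2 * k + 1) with hy
  -- the two sides of the relation in G
  have hkey : (x * y) ^ k * x = (y * x) ^ k * y := by
    have h := dih_rel (2 * k + 1)
    rw [altProd_odd, altProd_odd] at h
    exact h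
  have hφA : φ ((x * y) ^ k * x) = s := by
    rw [map_mul, map_pow, hφXY, hφX, mul_inv_cancel_left]
  have hXA : x * ((x * y) ^ k * x) = ((x * y) ^ k * x) * y := by
    conv_lhs => rw [hkey]
    rw [← mul_assoc, mul_pow_swap]
  have hYA : y * ((x * y) ^ k * x) = ((x * y) ^ k * x) * x := by
    conv_rhs => rw [hkey]
    rw [← mul_assoc, mul_pow_swap]
  have hvk1 : (x * y) ^ (k + 1) = ((x * y) ^ k * x) * y := by
    rw [pow_succ, ← mul_assoc]
  have hAA : ((x * y) ^ k * x) * ((x * y) ^ k * x) = (x * y) ^ (2 * k + 1) := by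
    nth_rewrite 2 [hkey]
    rw [mul_assoc ((x * y) ^ k), ← mul_assoc x, mul_pow_swap,
      mul_assoc ((x * y) ^ k) x y, ← mul_assoc ((x * y) ^ k) ((x * y) ^ k), ← pow_add,
      ← pow_succ]
    have hkk : k + k + 1 = 2 * k + 1 := by omega
    rw [hkk]
  -- centrality of c := (x*y) ^ (2k+1) = A * A
  have hcent : (x * y) ^ (2 * k + 1) ∈ Subgroup.center G := by
    rw [← hAA]
    apply mem_center_of_commute_gens
    intro i
    fin_cases i
    · show x * (((x * y) ^ k * x) * ((x * y) ^ k * x)) =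
        (((x * y) ^ k * x) * ((x * y) ^ k * x)) * x
      rw [← mul_assoc, hXA, mul_assoc, hYA, ← mul_assoc]
    · show y * (((x * y) ^ k * x) * ((x * y) ^ k * x)) =
        (((x * y) ^ k * x) * ((x * y) ^ k * x)) * y
      rw [← mul_assoc, hYA, mul_assoc, hXA, ← mul_assoc]
  -- surjectivity
  have hsurj : Function.Surjective φ := by
    have hrange : ∀ u : T, u ∈ φ.range := by
      intro u
      induction u using Coprod.induction_on with
      | inl a =>
        have ha : Coprod.inl a = s ^ (Multiplicative.toAdd a).val := by
          rw [hs, ← map_pow, ← zmod_eq_gen_pow]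
        rw [ha, ← hφA, ← map_pow]
        exact ⟨_, rfl⟩
      | inr a =>
        have ha : Coprod.inr a = t ^ (Multiplicative.toAdd a).val := by
          rw [ht, ← map_pow, ← zmod_eq_gen_pow]
        rw [ha, ← hφXY, ← map_pow]
        exact ⟨_, rfl⟩
      | mul u1 u2 hu1 hu2 => exact mul_mem hu1 hu2
    intro u
    exact hrange u
  -- triviality of the centre of T
  have hT1 : ∀ u : T, (∀ z : T, Commute z u) → u = 1 := by
    intro u hu
    refine Scratch2.coprod_eq_one_of_commute_all _ _
      (Multiplicative.ofAdd (1 : ZMod 2)) ?_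
      (Multiplicative.ofAdd (1 : ZMod (2 * k + 1))) ?_ u hu
    · intro hcon
      have h0 : (1 : ZMod 2) = 0 := by
        have := congrArg Multiplicative.toAdd hcon
        simpa using this
      exact one_ne_zero h0
    · intro hcon
      have h0 : (1 : ZMod (2 * k + 1)) = 0 := by
        have := congrArg Multiplicative.toAdd hcon
        simpa using this
      exact one_ne_zero h0
  -- the inverse homomorphism
  set Q := G ⧸ Subgroup.center G with hQ
  have hα2 : ((QuotientGroup.mk ((x * y) ^ k * x) : Q)) ^ (2 : ℕ) = 1 := by
    rw [← QuotientGroup.mk_pow]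
    apply (QuotientGroup.eq_one_iff _).2
    rw [pow_two, hAA]
    exact hcent
  have hβm : ((QuotientGroup.mk (x * y) : Q)) ^ (2 * k + 1 : ℕ) = 1 := by
    rw [← QuotientGroup.mk_pow]
    exact (QuotientGroup.eq_one_iff _).2 hcent
  set ψ : T →* Q := Coprod.lift (zmodGenHom 2 _ hα2) (zmodGenHom (2 * k + 1) _ hβm) with hψ
  have hψs : ψ s = QuotientGroup.mk ((x * y) ^ k * x) := by
    rw [hs, hψ, Coprod.lift_apply_inl, zmodGenHom_one]
  have hψt : ψ t = QuotientGroup.mk (x * y) := by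
    rw [ht, hψ, Coprod.lift_apply_inr, zmodGenHom_one]
  have hψφ : ∀ g : G, ψ (φ g) = QuotientGroup.mk g := by
    have hhom : ψ.comp φ = QuotientGroup.mk' (Subgroup.center G) := by
      apply PresentedGroup.ext
      intro i
      fin_cases i
      · show ψ (φ x) = _
        rw [hφX, map_mul, map_inv, map_pow, hψt, hψs]
        show _ = QuotientGroup.mk x
        rw [← QuotientGroup.mk_pow, ← QuotientGroup.mk_inv, ← QuotientGroup.mk_mul]
        rw [inv_mul_cancel_left]
      · show ψ (φ y) = _
        rw [hφY, map_mul, map_inv, map_pow, hψs, hψt]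
        show _ = QuotientGroup.mk y
        rw [← QuotientGroup.mk_pow, ← QuotientGroup.mk_inv, ← QuotientGroup.mk_mul]
        rw [hvk1, ← mul_assoc, inv_mul_cancel, one_mul]

    intro g
    exact DFunLike.congr_fun hhom g
  exact build_iso (2 * k + 1) f hrel hsurj hT1 ψ hψφ

end DihedralAux

end AuxDihedral

/-- For `m ≥ 3` and `Z` the center of `G(m)`: if `m` is even then
`G(m)/Z ≅ C_{m/2} ∗ C_∞`, and if `m` is odd then `G(m)/Z ≅ C₂ ∗ C_m`. -/
theorem dihedral_central_quotient (m : ℕ) (hm : 3 ≤ m) :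
    (Even m → Nonempty
      ((DihedralArtinGroup m ⧸ Subgroup.center (DihedralArtinGroup m)) ≃*
        Monoid.Coprod (Multiplicative (ZMod (m / 2))) (Multiplicative ℤ))) ∧
    (Odd m → Nonempty
      ((DihedralArtinGroup m ⧸ Subgroup.center (DihedralArtinGroup m)) ≃*
        Monoid.Coprod (Multiplicative (ZMod 2)) (Multiplicative (ZMod m)))) := by
  constructor
  · intro hEven
    obtain ⟨r, hr⟩ := hEven
    have h2 : m = 2 * r := by omega
    subst h2
    have hdiv : 2 * r / 2 = r := by omega
    rw [hdiv]
    exact DihedralAux.even_iso r (by omega)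
  · intro hOdd
    obtain ⟨r, hr⟩ := hOdd
    subst hr
    exact DihedralAux.odd_iso r (by omega)
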